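/- Let k ≥ 1 and n ≥ 2. Then γ_{[k]R}(C_9 □ P_n) ≤ 2n(k+1) + 2k. -/

import Mathlib

open Finset
open scoped Classical
open Fin.CommRing

/-- The cylindrical grid `C_m □ P_n`: the Cartesian (box) product of the
cycle on `m` vertices with the path on `n` vertices. -/
def cylGrid (m n : ℕ) : SimpleGraph (Fin m × Fin n) :=
  (SimpleGraph.cycleGraph m).boxProd (SimpleGraph.pathGraph n)

/-- `f : V → ℕ` is a `[k]`-Roman dominating function on `G`:
values lie in `{0,…,k+1}`, and every vertex `v` with `f v < k` satisfies
`f(N[v]) ≥ k + |AN(v)|`, where `AN(v)` is the set of neighbors of `v`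
with positive label. -/
def IsKRomanDF {V : Type*} [Fintype V] (G : SimpleGraph V) (k : ℕ) (f : V → ℕ) : Prop :=
  (∀ v, f v ≤ k + 1) ∧
  (∀ v, f v < k →
    k + (Finset.univ.filter fun u => G.Adj v u ∧ 0 < f u).card ≤
      f v + ∑ u ∈ Finset.univ.filter (fun u => G.Adj v u), f u)

/-- The `[k]`-Roman domination number: the minimum total weight of a
`[k]`-Roman dominating function. -/
noncomputable def gammaKR {V : Type*} [Fintype V] (G : SimpleGraph V) (k : ℕ) : ℕ :=
  sInf { w : ℕ | ∃ f : V → ℕ, IsKRomanDF G k f ∧ w = ∑ v, f v }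

/-- The packing number: the maximum cardinality of a set of vertices whose
closed neighborhoods are pairwise disjoint. -/
noncomputable def packingNumber {V : Type*} [Fintype V] (G : SimpleGraph V) : ℕ :=
  sSup { w : ℕ | ∃ D : Set V,
    (D.Pairwise fun u v =>
      Disjoint (insert u (G.neighborSet u)) (insert v (G.neighborSet v))) ∧
    w = D.ncard }

/-- key lemma: one (k+1)-neighbor suffices -/
lemma krdf_key {V : Type*} [Fintype V] (G : SimpleGraph V) (k : ℕ) (f : V → ℕ) (v u : V)
    (hadj : G.Adj v u) (hu : f u = k + 1) :
    k + (Finset.univ.filter fun w => G.Adj v w ∧ 0 < f w).card ≤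
      f v + ∑ w ∈ Finset.univ.filter (fun w => G.Adj v w), f w := by
  classical
  set T := Finset.univ.filter fun w => G.Adj v w ∧ 0 < f w with hT
  have huT : u ∈ T := by
    simp only [hT, Finset.mem_filter, Finset.mem_univ, true_and]
    exact ⟨hadj, by omega⟩
  have h1 : ∑ w ∈ T, f w ≤ ∑ w ∈ Finset.univ.filter (fun w => G.Adj v w), f w := by
    apply Finset.sum_le_sum_of_subset
    intro w hw
    simp only [hT, Finset.mem_filter, Finset.mem_univ, true_and] at hw ⊢
    exact hw.1
  have e1 : f u + ∑ x ∈ T.erase u, f x = ∑ x ∈ T, f x := Finset.add_sum_erase T f huT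
  have e2 : (T.erase u).card + 1 = T.card := Finset.card_erase_add_one huT
  have e3 : (T.erase u).card ≤ ∑ x ∈ T.erase u, f x := by
    have := Finset.card_nsmul_le_sum (T.erase u) f 1 ?_
    · simpa using this
    · intro x hx
      have := Finset.mem_of_mem_erase hx
      simp only [hT, Finset.mem_filter] at this
      omega
  omega

lemma cyc9_adj (a b : Fin 9) (h : a - b = 1 ∨ b - a = 1) :
    (SimpleGraph.cycleGraph 9).Adj a b :=
  SimpleGraph.cycleGraph_adj.mpr h

/-- the [k]-RDF witness on C9 □ Pn -/
def krFun (k n : ℕ) : Fin 9 × Fin n → ℕ := fun v =>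
  if v.1 = ((2 * v.2.val : ℕ) : Fin 9) ∨ v.1 = ((2 * v.2.val : ℕ) : Fin 9) + 4 then k + 1
  else if (v.2.val = 0 ∧ v.1 = 7) ∨ (v.2.val = n - 1 ∧ v.1 = ((2 * n + 4 : ℕ) : Fin 9)) then k
  else 0

lemma krFun_center (k n : ℕ) (i : Fin 9) (j : Fin n)
    (h : i = ((2 * j.val : ℕ) : Fin 9) ∨ i = ((2 * j.val : ℕ) : Fin 9) + 4) :
    krFun k n (i, j) = k + 1 := by
  simp only [krFun]
  rw [if_pos h]

lemma fin9_cases : ∀ r : Fin 9, r = 0 ∨ r = 1 ∨ r = 2 ∨ r = 3 ∨ r = 4 ∨ r = 5 ∨ r = 6 ∨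
    r = 7 ∨ r = 8 := by decide

lemma fin9_f1 : ∀ x : Fin 9, x - (x + 8) = 1 := by decide
lemma fin9_f2 : ∀ x : Fin 9, x + 7 = x - 2 := by decide

/-- domination: every non-center non-special vertex has a center neighbor -/
lemma krFun_dom (k n : ℕ) (hn : 2 ≤ n) (i : Fin 9) (j : Fin n)
    (hnc : ¬(i = ((2 * j.val : ℕ) : Fin 9) ∨ i = ((2 * j.val : ℕ) : Fin 9) + 4))
    (hns : ¬((j.val = 0 ∧ i = 7) ∨ (j.val = n - 1 ∧ i = ((2 * n + 4 : ℕ) : Fin 9)))) :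
    ∃ u : Fin 9 × Fin n, (cylGrid 9 n).Adj (i, j) u ∧ krFun k n u = k + 1 := by
  obtain ⟨r, hr⟩ : ∃ r : Fin 9, i = ((2 * j.val : ℕ) : Fin 9) + r := ⟨i - _, by ring⟩
  have hjlt : j.val < n := j.isLt
  -- cast facts
  have hcast1 : ∀ m : ℕ, ((2 * (m + 1) : ℕ) : Fin 9) = ((2 * m : ℕ) : Fin 9) + 2 := by
    intro m; push_cast; ring
  have hcast2 : ∀ m : ℕ, 1 ≤ m → ((2 * (m - 1) : ℕ) : Fin 9) = ((2 * m : ℕ) : Fin 9) - 2 := by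
    intro m hm
    rw [show 2 * (m - 1) = 2 * m - 2 by omega, Nat.cast_sub (by omega)]
    push_cast; ring
  rcases fin9_cases r with h | h | h | h | h | h | h | h | h <;> subst h
  · -- r = 0 : center
    exact absurd (Or.inl (by rw [hr, add_zero])) hnc
  · -- r = 1 : left cycle-neighbor is center c1
    refine ⟨(((2 * j.val : ℕ) : Fin 9), j), ?_, krFun_center _ _ _ _ (Or.inl rfl)⟩
    exact SimpleGraph.boxProd_adj.mpr (Or.inl ⟨cyc9_adj _ _ (Or.inl (by rw [hr]; ring)), rfl⟩)
  · -- r = 2 : column neighbor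
    by_cases hj : j.val + 1 < n
    · refine ⟨(i, ⟨j.val + 1, hj⟩), ?_, krFun_center _ _ _ _ (Or.inl ?_)⟩
      · exact SimpleGraph.boxProd_adj.mpr
          (Or.inr ⟨SimpleGraph.pathGraph_adj.mpr (Or.inl rfl), rfl⟩)
      · show i = ((2 * (j.val + 1) : ℕ) : Fin 9)
        rw [hr, hcast1]
    · -- j is the last column: use left column's second center
      have hj1 : 1 ≤ j.val := by omega
      refine ⟨(i, ⟨j.val - 1, by omega⟩), ?_, krFun_center _ _ _ _ (Or.inr ?_)⟩
      · refine SimpleGraph.boxProd_adj.mpr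
          (Or.inr ⟨SimpleGraph.pathGraph_adj.mpr (Or.inr ?_), rfl⟩)
        show (j.val - 1) + 1 = j.val
        omega
      · show i = ((2 * (j.val - 1) : ℕ) : Fin 9) + 4
        rw [hr, hcast2 _ hj1]; ring
  · -- r = 3 : right cycle-neighbor is center c2
    refine ⟨(((2 * j.val : ℕ) : Fin 9) + 4, j), ?_, krFun_center _ _ _ _ (Or.inr rfl)⟩
    exact SimpleGraph.boxProd_adj.mpr (Or.inl ⟨cyc9_adj _ _ (Or.inr (by rw [hr]; ring)), rfl⟩)
  · -- r = 4 : center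
    exact absurd (Or.inr hr) hnc
  · -- r = 5 : left cycle-neighbor is center c2
    refine ⟨(((2 * j.val : ℕ) : Fin 9) + 4, j), ?_, krFun_center _ _ _ _ (Or.inr rfl)⟩
    exact SimpleGraph.boxProd_adj.mpr (Or.inl ⟨cyc9_adj _ _ (Or.inl (by rw [hr]; ring)), rfl⟩)
  · -- r = 6 : right column neighbor's second center, or special at last column
    by_cases hj : j.val + 1 < n
    · refine ⟨(i, ⟨j.val + 1, hj⟩), ?_, krFun_center _ _ _ _ (Or.inr ?_)⟩
      · exact SimpleGraph.boxProd_adj.mpr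
          (Or.inr ⟨SimpleGraph.pathGraph_adj.mpr (Or.inl rfl), rfl⟩)
      · show i = ((2 * (j.val + 1) : ℕ) : Fin 9) + 4
        rw [hr, hcast1]; ring
    · exfalso
      apply hns
      right
      have hjv : j.val = n - 1 := by omega
      refine ⟨hjv, ?_⟩
      rw [hr, hjv, hcast2 n (by omega), show ((2 * n + 4 : ℕ) : Fin 9) =
        ((2 * n : ℕ) : Fin 9) + 4 by push_cast; ring]
      ring
  · -- r = 7 : left column neighbor's first center, or special at column 0
    by_cases hj : 1 ≤ j.val
    · refine ⟨(i, ⟨j.val - 1, by omega⟩), ?_, krFun_center _ _ _ _ (Or.inl ?_)⟩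
      · refine SimpleGraph.boxProd_adj.mpr
          (Or.inr ⟨SimpleGraph.pathGraph_adj.mpr (Or.inr ?_), rfl⟩)
        show (j.val - 1) + 1 = j.val
        omega
      · show i = ((2 * (j.val - 1) : ℕ) : Fin 9)
        rw [hr, hcast2 _ hj, fin9_f2]
    · exfalso
      apply hns
      left
      have hjv : j.val = 0 := by omega
      refine ⟨hjv, ?_⟩
      rw [hr, hjv]
      norm_num
  · -- r = 8 : right cycle-neighbor is center c1
    refine ⟨(((2 * j.val : ℕ) : Fin 9), j), ?_, krFun_center _ _ _ _ (Or.inl rfl)⟩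
    exact SimpleGraph.boxProd_adj.mpr
      (Or.inl ⟨cyc9_adj _ _ (Or.inr (by rw [hr]; exact fin9_f1 _)), rfl⟩)

lemma fin9_sum_ind : ∀ a : Fin 9,
    ∑ i : Fin 9, (if i = a ∨ i = a + 4 then (1 : ℕ) else 0) = 2 := by decide

lemma fin9_sum (c : ℕ) (a : Fin 9) :
    ∑ i : Fin 9, (if i = a ∨ i = a + 4 then c else 0) = 2 * c := by
  have h : ∀ i : Fin 9, (if i = a ∨ i = a + 4 then c else 0)
      = c * (if i = a ∨ i = a + 4 then 1 else 0) := by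
    intro i; split_ifs <;> ring
  rw [Finset.sum_congr rfl fun i _ => h i, ← Finset.mul_sum, fin9_sum_ind a]
  ring

theorem gammaKR_C9_linear (k n : ℕ) (hk : 1 ≤ k) (hn : 2 ≤ n) :
    gammaKR (cylGrid 9 n) k ≤ 2 * n * (k + 1) + 2 * k := by
  have hdf : IsKRomanDF (cylGrid 9 n) k (krFun k n) := by
    constructor
    · intro v
      simp only [krFun]
      split_ifs <;> omega
    · rintro ⟨i, j⟩ hv
      have hv' := hv
      simp only [krFun] at hv'
      split_ifs at hv' with h1 h2
      · exact absurd hv' (by omega)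
      · exact absurd hv' (by omega)
      · obtain ⟨u, hadj, hval⟩ := krFun_dom k n hn i j h1 h2
        exact krdf_key (cylGrid 9 n) k (krFun k n) (i, j) u hadj hval
  refine le_trans (Nat.sInf_le ⟨krFun k n, hdf, rfl⟩) ?_
  -- weight bound
  set x1 : Fin 9 × Fin n := ((7 : Fin 9), ⟨0, by omega⟩) with hx1
  set x2 : Fin 9 × Fin n := (((2 * n + 4 : ℕ) : Fin 9), ⟨n - 1, by omega⟩) with hx2
  have hpt : ∀ v : Fin 9 × Fin n, krFun k n v ≤
      (if v.1 = ((2 * v.2.val : ℕ) : Fin 9) ∨ v.1 = ((2 * v.2.val : ℕ) : Fin 9) + 4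
        then k + 1 else 0)
      + (if v = x1 then k else 0) + (if v = x2 then k else 0) := by
    intro v
    simp only [krFun]
    by_cases h1 : v.1 = ((2 * v.2.val : ℕ) : Fin 9) ∨ v.1 = ((2 * v.2.val : ℕ) : Fin 9) + 4
    · simp only [if_pos h1]
      exact le_trans (Nat.le_add_right _ _) (Nat.le_add_right _ _)
    · simp only [if_neg h1]
      by_cases h2 : (v.2.val = 0 ∧ v.1 = 7) ∨ (v.2.val = n - 1 ∧ v.1 = ((2 * n + 4 : ℕ) : Fin 9))
      · rw [if_pos h2]
        rcases h2 with ⟨hj, hi⟩ | ⟨hj, hi⟩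
        · have hv1 : v = x1 := by
            rw [hx1]
            exact Prod.ext hi (Fin.ext hj)
          rw [if_pos hv1]
          calc k = 0 + k := (Nat.zero_add k).symm
            _ ≤ 0 + k + _ := Nat.le_add_right _ _
        · have hv2 : v = x2 := by
            rw [hx2]
            exact Prod.ext hi (Fin.ext hj)
          rw [if_pos hv2]
          exact Nat.le_add_left _ _
      · rw [if_neg h2]
        exact Nat.zero_le _
  calc ∑ v, krFun k n v
      ≤ ∑ v : Fin 9 × Fin n,
        ((if v.1 = ((2 * v.2.val : ℕ) : Fin 9) ∨ v.1 = ((2 * v.2.val : ℕ) : Fin 9) + 4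
          then k + 1 else 0)
        + (if v = x1 then k else 0) + (if v = x2 then k else 0)) :=
        Finset.sum_le_sum fun v _ => hpt v
    _ = (∑ v : Fin 9 × Fin n,
          (if v.1 = ((2 * v.2.val : ℕ) : Fin 9) ∨ v.1 = ((2 * v.2.val : ℕ) : Fin 9) + 4
            then k + 1 else 0))
        + (∑ v : Fin 9 × Fin n, if v = x1 then k else 0)
        + (∑ v : Fin 9 × Fin n, if v = x2 then k else 0) := by
        rw [Finset.sum_add_distrib, Finset.sum_add_distrib]
    _ ≤ 2 * n * (k + 1) + 2 * k := by
        have hA : (∑ v : Fin 9 × Fin n,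
            (if v.1 = ((2 * v.2.val : ℕ) : Fin 9) ∨ v.1 = ((2 * v.2.val : ℕ) : Fin 9) + 4
              then k + 1 else 0)) = n * (2 * (k + 1)) := by
          rw [Fintype.sum_prod_type_right]
          have : ∀ j : Fin n, (∑ i : Fin 9,
              if i = ((2 * j.val : ℕ) : Fin 9) ∨ i = ((2 * j.val : ℕ) : Fin 9) + 4
                then k + 1 else 0) = 2 * (k + 1) := fun j => fin9_sum (k + 1) _
          rw [Finset.sum_congr rfl fun j _ => this j, Finset.sum_const, Finset.card_univ,
            Fintype.card_fin, smul_eq_mul]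
        have hB : (∑ v : Fin 9 × Fin n, if v = x1 then k else 0) = k := by
          simp [Finset.sum_ite_eq']
        have hC : (∑ v : Fin 9 × Fin n, if v = x2 then k else 0) = k := by
          simp [Finset.sum_ite_eq']
        rw [hA, hB, hC]
        have : n * (2 * (k + 1)) + k + k = 2 * n * (k + 1) + 2 * k := by ring
        omega
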